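/- Let H be a graph on {x_1,...,x_n} and G = H* its whisker graph. A subset C of the vertices of G is a minimal vertex cover of G if and only if C contains exactly one of x_i, y_i for each i, and the set {x_i : x_i ∈ C} is a vertex cover of H such that whenever y_i ∈ C, all neighbors of x_i in H lie in C. -/
import Mathlib


/-- A vertex cover: a set of vertices meeting every edge. -/
def IsVertexCover {V : Type*} (G : SimpleGraph V) (C : Set V) : Prop :=
  ∀ ⦃v w : V⦄, G.Adj v w → v ∈ C ∨ w ∈ C

/-- A minimal vertex cover: no proper subset is a vertex cover. -/
def IsMinimalVertexCover {V : Type*} (G : SimpleGraph V) (C : Set V) : Prop :=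
  IsVertexCover G C ∧ ∀ D : Set V, D ⊂ C → ¬ IsVertexCover G D

/-- An independent set: pairwise non-adjacent vertices. -/
def IsIndepSet {V : Type*} (G : SimpleGraph V) (S : Set V) : Prop :=
  ∀ ⦃v : V⦄, v ∈ S → ∀ ⦃w : V⦄, w ∈ S → ¬ G.Adj v w

/-- A maximal independent set: no proper superset is independent. -/
def IsMaximalIndepSet {V : Type*} (G : SimpleGraph V) (S : Set V) : Prop :=
  IsIndepSet G S ∧ ∀ T : Set V, IsIndepSet G T → S ⊆ T → S = T


/-- The whisker graph `H*` of a graph `H` on `{x_1,…,x_n}`: vertices `x_i = Sum.inl i`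
and `y_i = Sum.inr i`, edges those of `H` together with the whiskers `x_i y_i`. -/
def whisker {n : ℕ} (H : SimpleGraph (Fin n)) : SimpleGraph (Fin n ⊕ Fin n) :=
  SimpleGraph.fromRel (fun v w =>
    (∃ i j : Fin n, v = Sum.inl i ∧ w = Sum.inl j ∧ H.Adj i j) ∨
    (∃ i : Fin n, v = Sum.inl i ∧ w = Sum.inr i))


lemma whisker_adj_inl_inl {n : ℕ} (H : SimpleGraph (Fin n)) (i j : Fin n) :
    (whisker H).Adj (Sum.inl i) (Sum.inl j) ↔ H.Adj i j := by
  simp only [whisker, SimpleGraph.fromRel_adj]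
  constructor
  · rintro ⟨hne, (⟨a,b,ha,hb,hab⟩|⟨a,ha,hb⟩)|(⟨a,b,ha,hb,hab⟩|⟨a,ha,hb⟩)⟩
    · cases ha; cases hb; exact hab
    · exact absurd hb (by simp)
    · cases ha; cases hb; exact hab.symm
    · exact absurd hb (by simp)
  · intro h
    exact ⟨by simpa using h.ne, Or.inl (Or.inl ⟨i, j, rfl, rfl, h⟩)⟩

lemma whisker_adj_inl_inr {n : ℕ} (H : SimpleGraph (Fin n)) (i j : Fin n) :
    (whisker H).Adj (Sum.inl i) (Sum.inr j) ↔ i = j := by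
  simp only [whisker, SimpleGraph.fromRel_adj]
  constructor
  · rintro ⟨hne, (⟨a,b,ha,hb,hab⟩|⟨a,ha,hb⟩)|(⟨a,b,ha,hb,hab⟩|⟨a,ha,hb⟩)⟩
    · exact absurd hb (by simp)
    · cases ha; cases hb; rfl
    · exact absurd ha (by simp)
    · exact absurd ha (by simp)
  · rintro rfl
    exact ⟨by simp, Or.inl (Or.inr ⟨i, rfl, rfl⟩)⟩

lemma whisker_not_adj_inr {n : ℕ} (H : SimpleGraph (Fin n)) (i : Fin n) (w : Fin n ⊕ Fin n) :
    (whisker H).Adj (Sum.inr i) w → ∃ j, w = Sum.inl j := by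
  cases w with
  | inl j => exact fun _ => ⟨j, rfl⟩
  | inr j =>
    simp only [whisker, SimpleGraph.fromRel_adj]
    rintro ⟨hne, (⟨a,b,ha,hb,hab⟩|⟨a,ha,hb⟩)|(⟨a,b,ha,hb,hab⟩|⟨a,ha,hb⟩)⟩ <;>
      first
      | exact absurd ha (by simp)
      | exact absurd hb (by simp)

/-- Characterization of minimal vertex covers of a whisker graph. -/
theorem stmt_7 {n : ℕ} (H : SimpleGraph (Fin n)) (C : Set (Fin n ⊕ Fin n)) :
    IsMinimalVertexCover (whisker H) C ↔
      ((∀ i : Fin n, Xor' (Sum.inl i ∈ C) (Sum.inr i ∈ C)) ∧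
        IsVertexCover H {i : Fin n | Sum.inl i ∈ C} ∧
        (∀ i : Fin n, Sum.inr i ∈ C → ∀ j : Fin n, H.Adj i j → Sum.inl j ∈ C)) := by
  constructor
  · rintro ⟨hC, hmin⟩
    have hxor : ∀ i : Fin n, Xor' (Sum.inl i ∈ C) (Sum.inr i ∈ C) := by
      intro i
      have hone : Sum.inl i ∈ C ∨ Sum.inr i ∈ C :=
        hC ((whisker_adj_inl_inr H i i).2 rfl)
      by_cases hx : Sum.inl i ∈ C
      · refine Or.inl ⟨hx, fun hy => ?_⟩
        -- removing y_i still gives a cover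
        apply hmin (C \ {Sum.inr i}) ⟨Set.diff_subset, fun hsub => (hsub hy).2 rfl⟩
        intro v w hvw
        rcases hC hvw with hv | hw
        · by_cases hvi : v = Sum.inr i
          · subst hvi
            obtain ⟨j, rfl⟩ := whisker_not_adj_inr H i w hvw
            have : i = j := ((whisker_adj_inl_inr H j i).1 hvw.symm).symm
            subst this
            exact Or.inr ⟨hx, by simp⟩
          · exact Or.inl ⟨hv, hvi⟩
        · by_cases hwi : w = Sum.inr i
          · subst hwi
            obtain ⟨j, rfl⟩ := whisker_not_adj_inr H i v hvw.symm
            have : j = i := (whisker_adj_inl_inr H j i).1 hvw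
            subst this
            exact Or.inl ⟨hx, by simp⟩
          · exact Or.inr ⟨hw, hwi⟩
      · exact Or.inr ⟨hone.resolve_left hx, hx⟩
    refine ⟨hxor, ?_, ?_⟩
    · intro i j hij
      exact hC ((whisker_adj_inl_inl H i j).2 hij)
    · intro i hy j hij
      have hx : Sum.inl i ∉ C := ((hxor i).resolve_left (fun h => h.2 hy)).2
      exact (hC ((whisker_adj_inl_inl H i j).2 hij)).resolve_left hx
  · rintro ⟨hxor, hcov, hnbr⟩
    constructor
    · intro v w hvw
      cases v with
      | inl i =>
        cases w with
        | inl j =>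
          have hij := (whisker_adj_inl_inl H i j).1 hvw
          by_cases hx : Sum.inl i ∈ C
          · exact Or.inl hx
          · have hy : Sum.inr i ∈ C := ((hxor i).resolve_left (fun h => hx h.1)).1
            exact Or.inr (hnbr i hy j hij)
        | inr j =>
          have : i = j := (whisker_adj_inl_inr H i j).1 hvw
          subst this
          rcases hxor i with h | h
          · exact Or.inl h.1
          · exact Or.inr h.1
      | inr i =>
        obtain ⟨j, rfl⟩ := whisker_not_adj_inr H i w hvw
        have hji : j = i := ((whisker_adj_inl_inr H j i).1 hvw.symm)
        subst hji
        rcases hxor j with h | h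
        · exact Or.inr h.1
        · exact Or.inl h.1
    · rintro D ⟨hDC, hne⟩ hDcov
      obtain ⟨v, hvC, hvD⟩ := Set.not_subset.1 (fun h => hne h)
      cases v with
      | inl i =>
        have hy : Sum.inr i ∉ C := ((hxor i).resolve_right (fun h => h.2 hvC)).2
        rcases hDcov ((whisker_adj_inl_inr H i i).2 rfl) with h | h
        · exact hvD h
        · exact hy (hDC h)
      | inr i =>
        have hx : Sum.inl i ∉ C := ((hxor i).resolve_left (fun h => h.2 hvC)).2
        rcases hDcov ((whisker_adj_inl_inr H i i).2 rfl) with h | h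
        · exact hx (hDC h)
        · exact hvD h
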